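/- Strict phantom bound under ghost freedom: for every β > 0, V ∈ ℝ, and all real X > 0 and H ≠ 0, if M(X,H) > 0 and ρ(X,H) > 0, then the equation of state parameter w = P(X,H)/ρ(X,H) satisfies w > −1 strictly. -/

import Mathlib

/-- Effective pressure `P(X,H) = X − V − β·X²/(H² + X)`. -/
noncomputable def Peff (β V X H : ℝ) : ℝ := X - V - β * X ^ 2 / (H ^ 2 + X)

/-- Effective energy density `ρ(X,H) = X + V − β·X²(3H² + X)/(H² + X)²`. -/
noncomputable def rhoEff (β V X H : ℝ) : ℝ :=
  X + V - β * X ^ 2 * (3 * H ^ 2 + X) / (H ^ 2 + X) ^ 2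

/-- Kinetic response function `M(X,H) = ∂ρ/∂X`. -/
noncomputable def Mresp (β X H : ℝ) : ℝ :=
  1 - β * X * (6 * H ^ 4 + 3 * H ^ 2 * X + X ^ 2) / (H ^ 2 + X) ^ 3

/-- strict phantom bound under ghost freedom: if `X > 0`, `H ≠ 0`,
`M > 0` and `ρ > 0`, then `w = P/ρ > −1` strictly. -/
theorem strict_phantom_bound (β V X H : ℝ) (hβ : 0 < β) (hX : 0 < X) (hH : H ≠ 0)
    (hM : 0 < Mresp β X H) (hρ : 0 < rhoEff β V X H) :
    -1 < Peff β V X H / rhoEff β V X H := by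
  have hH2 : 0 < H ^ 2 := by positivity
  have hD : 0 < H ^ 2 + X := by linarith
  rw [lt_div_iff₀ hρ]
  have hM' : β * X * (6 * H ^ 4 + 3 * H ^ 2 * X + X ^ 2) < (H ^ 2 + X) ^ 3 := by
    have := hM
    unfold Mresp at this
    rw [sub_pos, div_lt_one (by positivity)] at this
    exact this
  unfold Peff rhoEff at *
  have key : 0 < (X - V - β * X ^ 2 / (H ^ 2 + X)) +
      (X + V - β * X ^ 2 * (3 * H ^ 2 + X) / (H ^ 2 + X) ^ 2) := by
    have h1 : X - V - β * X ^ 2 / (H ^ 2 + X) + (X + V - β * X ^ 2 * (3 * H ^ 2 + X) / (H ^ 2 + X) ^ 2)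
        = (2 * X * (H ^ 2 + X) ^ 2 - β * X ^ 2 * (4 * H ^ 2 + 2 * X)) / (H ^ 2 + X) ^ 2 := by
      field_simp
      ring
    rw [h1]
    apply div_pos _ (by positivity)
    have h2 : β * X * ((2 * H ^ 2 + X) * (H ^ 2 + X)) < (H ^ 2 + X) ^ 3 := by
      nlinarith [mul_pos (mul_pos hβ hX) (mul_pos hH2 hH2)]
    have h3 : β * X * (2 * H ^ 2 + X) < (H ^ 2 + X) ^ 2 := by
      have := (mul_lt_mul_iff_left₀ hD).mp (by nlinarith : β * X * (2 * H ^ 2 + X) * (H ^ 2 + X) < (H ^ 2 + X) ^ 2 * (H ^ 2 + X))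
      exact this
    nlinarith [mul_pos hX (sub_pos.mpr h3)]
  linarith
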